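/- For the inverse Hasse–Schmidt operators 𝔇_h on ⋀M_n, for every h ≥ 1, every m ≥ 0 and all indices i₁,…,i_h ≥ 1: 𝔇_h^m(ε^{i₁} ∧ ⋯ ∧ ε^{i_h}) = ε^{i₁+m} ∧ ⋯ ∧ ε^{i_h+m}. -/

import Mathlib

open ExteriorAlgebra

section Aux

variable {M : Type*} [AddCommGroup M] [Module ℤ M] (ε : ℕ → M)
  (Dbar : ℕ → Module.End ℤ (ExteriorAlgebra ℤ M))
  (hB0 : Dbar 0 = 1)
  (hBLeib : ∀ (h : ℕ) (p q : ExteriorAlgebra ℤ M),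
    Dbar h (p * q) = ∑ x ∈ Finset.HasAntidiagonal.antidiagonal h, Dbar x.1 p * Dbar x.2 q)
  (hB1 : ∀ i : ℕ, 1 ≤ i → Dbar 1 (ι ℤ (ε i)) = ι ℤ (ε (i + 1)))
  (hBhi : ∀ j i : ℕ, 2 ≤ j → 1 ≤ i → Dbar j (ι ℤ (ε i)) = 0)

include hB0 hBLeib hB1 hBhi in
lemma hs_leib2 (i₀ : ℕ) (hi : 1 ≤ i₀) (j : ℕ) (q : ExteriorAlgebra ℤ M) :
    Dbar (j + 1) (ι ℤ (ε i₀) * q) =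
      ι ℤ (ε i₀) * Dbar (j + 1) q + ι ℤ (ε (i₀ + 1)) * Dbar j q := by
  rw [hBLeib]
  have hsub : ({(0, j + 1), (1, j)} : Finset (ℕ × ℕ)) ⊆ Finset.HasAntidiagonal.antidiagonal (j + 1) := by
    intro x hx
    simp only [Finset.mem_insert, Finset.mem_singleton] at hx
    rcases hx with rfl | rfl <;> simp [Finset.mem_antidiagonal] <;> omega
  rw [← Finset.sum_subset hsub]
  · rw [Finset.sum_insert (by simp), Finset.sum_singleton]
    simp [hB0, hB1 i₀ hi]
  · intro x hx hx'
    simp only [Finset.mem_insert, Finset.mem_singleton, not_or] at hx'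
    rw [Finset.HasAntidiagonal.mem_antidiagonal] at hx
    have h2 : 2 ≤ x.1 := by
      rcases x with ⟨a, b⟩
      by_contra hcon
      interval_cases a
      · exact hx'.1 (by simp at hx ⊢; omega)
      · exact hx'.2 (by simp at hx ⊢; omega)
    rw [hBhi x.1 i₀ h2 hi, zero_mul]

include hB0 hBLeib hB1 hBhi in
lemma hs_main : ∀ (k : ℕ), 1 ≤ k → ∀ i : Fin k → ℕ, (∀ j, 1 ≤ i j) →
    (∀ j, k < j → Dbar j ((List.ofFn fun j => ι ℤ (ε (i j))).prod) = 0) ∧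
    Dbar k ((List.ofFn fun j => ι ℤ (ε (i j))).prod) =
      (List.ofFn fun j => ι ℤ (ε (i j + 1))).prod := by
  intro k
  induction k with
  | zero => omega
  | succ k IH =>
    intro _ i hi
    rcases Nat.eq_zero_or_pos k with rfl | hk
    · constructor
      · intro j hj
        rcases j with _ | _ | j
        · omega
        · omega
        · simpa using hBhi (j + 2) (i 0) (by omega) (hi 0)
      · simpa using hB1 (i 0) (hi 0)
    · have IH' := IH hk (fun j => i j.succ) (fun j => hi j.succ)
      have hexp : (List.ofFn fun j => ι ℤ (ε (i j))).prod =
          ι ℤ (ε (i 0)) * (List.ofFn fun j : Fin k => ι ℤ (ε (i j.succ))).prod := by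
        rw [List.ofFn_succ, List.prod_cons]
      constructor
      · intro j hj
        rcases j with _ | j
        · omega
        · rw [hexp, hs_leib2 ε Dbar hB0 hBLeib hB1 hBhi (i 0) (hi 0) j,
            IH'.1 (j + 1) (by omega), IH'.1 j (by omega)]
          simp
      · rw [hexp, hs_leib2 ε Dbar hB0 hBLeib hB1 hBhi (i 0) (hi 0) k,
          IH'.1 (k + 1) (by omega), IH'.2]
        rw [show (List.ofFn fun j => ι ℤ (ε (i j + 1))).prod =
            ι ℤ (ε (i 0 + 1)) * (List.ofFn fun j : Fin k => ι ℤ (ε (i j.succ + 1))).prod by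
          rw [List.ofFn_succ, List.prod_cons]]
        simp

end Aux

open ExteriorAlgebra in
/-- For the inverse Hasse–Schmidt operators on `⋀M_n`:
`𝔇_h^m(ε^{i₁} ∧ ⋯ ∧ ε^{i_h}) = ε^{i₁+m} ∧ ⋯ ∧ ε^{i_h+m}`. -/
theorem inverse_hasseSchmidt_top_power (n : ℕ) (M : Type*) [AddCommGroup M]
    [Module ℤ M] (ε : ℕ → M) (hε : ∀ m : ℕ, n < m → ε m = 0)
    (Dbar : ℕ → Module.End ℤ (ExteriorAlgebra ℤ M))
    (hB0 : Dbar 0 = 1)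
    (hBLeib : ∀ (h : ℕ) (p q : ExteriorAlgebra ℤ M),
      Dbar h (p * q) = ∑ x ∈ Finset.HasAntidiagonal.antidiagonal h, Dbar x.1 p * Dbar x.2 q)
    (hB1 : ∀ i : ℕ, 1 ≤ i → Dbar 1 (ι ℤ (ε i)) = ι ℤ (ε (i + 1)))
    (hBhi : ∀ j i : ℕ, 2 ≤ j → 1 ≤ i → Dbar j (ι ℤ (ε i)) = 0) :
    ∀ (h m : ℕ), 1 ≤ h → ∀ i : Fin h → ℕ, (∀ j, 1 ≤ i j) →
      (Dbar h ^ m) ((List.ofFn fun j => ι ℤ (ε (i j))).prod) =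
        (List.ofFn fun j => ι ℤ (ε (i j + m))).prod := by
  intro h m hh
  induction m with
  | zero => intro i hi; simp
  | succ m IHm =>
    intro i hi
    have step := (hs_main ε Dbar hB0 hBLeib hB1 hBhi h hh i hi).2
    rw [pow_succ, Module.End.mul_apply, step]
    have := IHm (fun j => i j + 1) (fun j => Nat.le_add_left 1 (i j))
    rw [this]
    have heq : ∀ j : Fin h, i j + 1 + m = i j + (m + 1) := fun j => by omega
    simp only [heq]
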